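/- Let X and Y be binary (J = K = 2) and let p be a joint distribution of (T,X,Y,M) with all cells strictly positive (p(t,x,y,m) > 0 for all cells) that satisfies p(t,x,y,1) = exp(β₀ + β_T·t + β_X·x + β_Y·y)·p(t,x,y,0) for all t,x,y ∈ {0,1}, for some reals β₀, β_T, β_X, β_Y. Define E = p(0,1,1,0)·p(1,1,0,0)/(p(0,+,1,1)·p(1,+,0,1)) − p(0,1,0,0)·p(1,1,1,0)/(p(0,+,0,1)·p(1,+,1,1)), F = [p(0,1,1,0)·p(1,0,0,0) + p(0,0,1,0)·p(1,1,0,0)]/(p(0,+,1,1)·p(1,+,0,1)) − [p(0,1,0,0)·p(1,0,1,0) + p(0,0,0,0)·p(1,1,1,0)]/(p(0,+,0,1)·p(1,+,1,1)), and G = p(0,0,1,0)·p(1,0,0,0)/(p(0,+,1,1)·p(1,+,0,1)) − p(0,0,0,0)·p(1,0,1,0)/(p(0,+,0,1)·p(1,+,1,1)). Then B = exp(β_X) satisfies the quadratic equation E·B² + F·B + G = 0. -/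

import Mathlib

/-- Under the logistic missing mechanism 4 (binary X and Y), the quantity
B = exp(β_X) satisfies the quadratic equation E·B² + F·B + G = 0 built from the observed
data. -/
theorem mechanism4_quadratic
    (p : Fin 2 → Fin 2 → Fin 2 → Fin 2 → ℝ)
    (hp_pos : ∀ t x y m, 0 < p t x y m)
    (hp_sum : ∑ t, ∑ x, ∑ y, ∑ m, p t x y m = 1)
    (b0 bT bX bY : ℝ)
    -- logistic missing mechanism 4
    (hp_mech : ∀ t x y : Fin 2,
      p t x y 1 = Real.exp (b0 + bT * ((t : ℕ) : ℝ) + bX * ((x : ℕ) : ℝ)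
        + bY * ((y : ℕ) : ℝ)) * p t x y 0)
    (E F G B : ℝ)
    (hE : E = p 0 1 1 0 * p 1 1 0 0 / ((∑ x, p 0 x 1 1) * (∑ x, p 1 x 0 1))
            - p 0 1 0 0 * p 1 1 1 0 / ((∑ x, p 0 x 0 1) * (∑ x, p 1 x 1 1)))
    (hF : F = (p 0 1 1 0 * p 1 0 0 0 + p 0 0 1 0 * p 1 1 0 0)
                / ((∑ x, p 0 x 1 1) * (∑ x, p 1 x 0 1))
            - (p 0 1 0 0 * p 1 0 1 0 + p 0 0 0 0 * p 1 1 1 0)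
                / ((∑ x, p 0 x 0 1) * (∑ x, p 1 x 1 1)))
    (hG : G = p 0 0 1 0 * p 1 0 0 0 / ((∑ x, p 0 x 1 1) * (∑ x, p 1 x 0 1))
            - p 0 0 0 0 * p 1 0 1 0 / ((∑ x, p 0 x 0 1) * (∑ x, p 1 x 1 1)))
    (hB : B = Real.exp bX) :
    E * B ^ 2 + F * B + G = 0 := by
  subst hE hF hG hB
  have hS1 : (∑ x, p 0 x 1 1)
      = Real.exp b0 * Real.exp bY * (p 0 0 1 0 + Real.exp bX * p 0 1 1 0) := by
    simp [Fin.sum_univ_two, hp_mech, Real.exp_add]; ring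
  have hS2 : (∑ x, p 1 x 0 1)
      = Real.exp b0 * Real.exp bT * (p 1 0 0 0 + Real.exp bX * p 1 1 0 0) := by
    simp [Fin.sum_univ_two, hp_mech, Real.exp_add]; ring
  have hS3 : (∑ x, p 0 x 0 1)
      = Real.exp b0 * (p 0 0 0 0 + Real.exp bX * p 0 1 0 0) := by
    simp [Fin.sum_univ_two, hp_mech, Real.exp_add]; ring
  have hS4 : (∑ x, p 1 x 1 1)
      = Real.exp b0 * Real.exp bT * Real.exp bY * (p 1 0 1 0 + Real.exp bX * p 1 1 1 0) := by
    simp [Fin.sum_univ_two, hp_mech, Real.exp_add]; ring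
  rw [hS1, hS2, hS3, hS4]
  have hu1 : (p 0 0 1 0 + Real.exp bX * p 0 1 1 0) ≠ 0 := by
    have h1 := hp_pos 0 0 1 0; have h2 := hp_pos 0 1 1 0; positivity
  have hu2 : (p 1 0 0 0 + Real.exp bX * p 1 1 0 0) ≠ 0 := by
    have h1 := hp_pos 1 0 0 0; have h2 := hp_pos 1 1 0 0; positivity
  have hu3 : (p 0 0 0 0 + Real.exp bX * p 0 1 0 0) ≠ 0 := by
    have h1 := hp_pos 0 0 0 0; have h2 := hp_pos 0 1 0 0; positivity
  have hu4 : (p 1 0 1 0 + Real.exp bX * p 1 1 1 0) ≠ 0 := by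
    have h1 := hp_pos 1 0 1 0; have h2 := hp_pos 1 1 1 0; positivity
  have hu1' : (p 0 0 1 0 + p 0 1 1 0 * Real.exp bX) ≠ 0 := by rwa [mul_comm]
  have hu2' : (p 1 0 0 0 + p 1 1 0 0 * Real.exp bX) ≠ 0 := by rwa [mul_comm]
  field_simp
  ring
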